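/- Let A ⊆ ℕ and h : ℕ → ℕ a bijection (a disorderly selection). Suppose for every s there exists n > s such that |[0, n(s+1)) ∩ h⁻¹(A)| ≥ n·s. Then limsup_m |h⁻¹(A) ∩ [0,m)|/m = 1; in particular h⁻¹(A) does not have density 0, so A is not intrinsically small if h is computable. -/

import Mathlib

open Filter Topology Classical

/-- `cnt A n = |A ∩ [0,n)|`. -/
noncomputable def cnt (A : Set ℕ) (n : ℕ) : ℕ :=
  ((Finset.range n).filter (· ∈ A)).card

/-- `dens A n = |A ∩ [0,n)| / n`, the density of `A` at `n`. -/
noncomputable def dens (A : Set ℕ) (n : ℕ) : ℝ := (cnt A n : ℝ) / n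

/-- `A` has intrinsic density `α`: `π(A)` has density `α` for every
computable permutation `π` of `ℕ`. -/
def IntrinsicDensity (A : Set ℕ) (α : ℝ) : Prop :=
  ∀ π : ℕ ≃ ℕ, Computable ⇑π → Tendsto (dens (⇑π '' A)) atTop (𝓝 α)

lemma cnt_le (A : Set ℕ) (n : ℕ) : cnt A n ≤ n := by
  simpa [cnt] using Finset.card_filter_le (Finset.range n) (· ∈ A)

lemma dens_nonneg (A : Set ℕ) (n : ℕ) : 0 ≤ dens A n := by
  unfold dens; positivity

lemma dens_le_one (A : Set ℕ) (n : ℕ) : dens A n ≤ 1 := by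
  unfold dens
  rcases Nat.eq_zero_or_pos n with rfl | hn
  · simp
  · rw [div_le_one (by exact_mod_cast hn)]
    exact_mod_cast cnt_le A n

lemma symm_computable (h : ℕ ≃ ℕ) (hc : Computable ⇑h) : Computable ⇑h.symm := by
  have hd : Computable₂ fun (a n : ℕ) => decide (h n = a) :=
    (Primrec.eq.decide.to_comp).comp (hc.comp Computable.snd) Computable.fst
  have hpr := Partrec.rfind hd.partrec.to₂
  refine hpr.of_eq_tot fun a => ?_
  apply Nat.mem_rfind.2
  constructor
  · simp
  · intro m hm
    have hne : h m ≠ a := by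
      intro he
      have : m = h.symm a := h.injective (by simp [he])
      omega
    simp [hne]

theorem stmt14 (A : Set ℕ) (h : ℕ ≃ ℕ)
    (hyp : ∀ s : ℕ, ∃ n > s, n * s ≤ cnt {t | h t ∈ A} (n * (s + 1))) :
    limsup (dens {t | h t ∈ A}) atTop = 1 ∧
      ¬ Tendsto (dens {t | h t ∈ A}) atTop (𝓝 0) ∧
      (Computable ⇑h → ¬ IntrinsicDensity A 0) := by
  set B := {t | h t ∈ A} with hB
  have hfreq : ∀ s : ℕ, ∃ᶠ m in atTop, (s : ℝ) / (s + 1) ≤ dens B m := by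
    intro s
    rw [frequently_atTop]
    intro N
    obtain ⟨n, hn, hcnt⟩ := hyp (max s N)
    set s' := max s N with hs'
    refine ⟨n * (s' + 1), ?_, ?_⟩
    · have h1 : N ≤ s' := le_max_right _ _
      have : n ≤ n * (s' + 1) := Nat.le_mul_of_pos_right n (by omega)
      omega
    · have hnpos : 0 < n := by omega
      have key : (s' : ℝ) / (s' + 1) ≤ dens B (n * (s' + 1)) := by
        unfold dens
        rw [div_le_div_iff₀ (by positivity) (by positivity)]
        have : (n * s' : ℝ) ≤ (cnt B (n * (s' + 1)) : ℝ) := by exact_mod_cast hcnt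
        have hn1 : (1 : ℝ) ≤ n := by exact_mod_cast hnpos
        push_cast
        nlinarith
      have mono : (s : ℝ) / (s + 1) ≤ (s' : ℝ) / (s' + 1) := by
        have hss' : (s : ℝ) ≤ s' := by exact_mod_cast le_max_left s N
        rw [div_le_div_iff₀ (by positivity) (by positivity)]
        nlinarith
      linarith
  have hbdd : IsBoundedUnder (· ≤ ·) atTop (dens B) :=
    isBoundedUnder_of ⟨1, fun m => dens_le_one _ _⟩
  have hcobdd : IsCoboundedUnder (· ≤ ·) atTop (dens B) :=
    isCoboundedUnder_le_of_le atTop fun m => dens_nonneg _ _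
  have hle : limsup (dens B) atTop ≤ 1 :=
    limsup_le_of_le hcobdd (Eventually.of_forall fun m => dens_le_one _ _)
  have hge : (1 : ℝ) ≤ limsup (dens B) atTop := by
    have hlim : Tendsto (fun s : ℕ => (s : ℝ) / (s + 1)) atTop (𝓝 1) := by
      simpa using tendsto_natCast_div_add_atTop (𝕜 := ℝ) 1
    exact le_of_tendsto' hlim fun s => le_limsup_of_frequently_le (hfreq s) hbdd
  have heq : limsup (dens B) atTop = 1 := le_antisymm hle hge
  have hnot : ¬ Tendsto (dens B) atTop (𝓝 0) := by
    intro ht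
    have h0 := ht.limsup_eq
    rw [heq] at h0
    norm_num at h0
  refine ⟨heq, hnot, ?_⟩
  intro hcomp hid
  have himg : ⇑h.symm '' A = B := by
    ext t
    constructor
    · rintro ⟨a, ha, rfl⟩; simpa [hB] using ha
    · intro ha; exact ⟨h t, ha, by simp⟩
  have := hid h.symm (symm_computable h hcomp)
  rw [himg] at this
  exact hnot this
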